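/- Let [b,e] be a (p-1)-segment of X^{p-1} and let Q^p[b..e] be the p-th symbols of the suffixes in that segment. Then the interval [b,e] decomposes in X^p into exactly n consecutive p-segments, where n = (number of distinct non-sentinel symbols occurring in Q^p[b..e]) + (number of sentinel symbols in Q^p[b..e]); the first #_$ of these p-segments (one per sentinel occurrence) have width 1, and for each distinct non-sentinel symbol c the corresponding p-segment has width equal to the number of occurrences of c in Q^p[b..e]. -/

import Mathlib

open scoped Classical

/-- Symbol type for suffixes: ranked sentinels (ordered by (suffix length, string index))
below all regular alphabet symbols. -/
abbrev SSym (A : Type*) := (ℕ ×ₗ ℕ) ⊕ₗ A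

variable {A : Type*} [LinearOrder A] {m k : ℕ}

/-- `symAt s (q, l) t` is the `t`-th symbol (0-indexed) of the `l`-suffix of the
string `s q` (a string of length `k`), padded beyond its end with its own ranked sentinel. -/
def symAt (s : Fin m → Fin k → A) (o : Fin m × Fin (k+1)) (t : ℕ) : SSym A :=
  if _h : t < (o.2 : ℕ) then
    toLex (Sum.inr (s o.1 ⟨k - (o.2 : ℕ) + t, by have := o.2.isLt; omega⟩))
  else
    toLex (Sum.inl (toLex ((o.2 : ℕ), (o.1 : ℕ))))

/-- The `p`-prefix of the suffix occurrence `o`. -/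
def pprefix (s : Fin m → Fin k → A) (p : ℕ) (o : Fin m × Fin (k+1)) : List (SSym A) :=
  List.ofFn fun t : Fin p => symAt s o t

/-- The full suffix string of occurrence `o` (its `l` symbols followed by its sentinel). -/
def suffStr (s : Fin m → Fin k → A) (o : Fin m × Fin (k+1)) : List (SSym A) :=
  List.ofFn fun t : Fin ((o.2 : ℕ) + 1) => symAt s o t

/-- The order `≺_p`: compare `p`-prefixes lexicographically, then suffix lengths,
then string indices. -/
def precP (s : Fin m → Fin k → A) (p : ℕ) (α β : Fin m × Fin (k+1)) : Prop :=
  List.Lex (· < ·) (pprefix s p α) (pprefix s p β) ∨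
    (pprefix s p α = pprefix s p β ∧
      ((α.2 : ℕ) < (β.2 : ℕ) ∨ ((α.2 : ℕ) = (β.2 : ℕ) ∧ (α.1 : ℕ) < (β.1 : ℕ))))

/-- Full lexicographic order on suffix occurrences, ties broken by length then string index. -/
def fullOrd (s : Fin m → Fin k → A) (α β : Fin m × Fin (k+1)) : Prop :=
  List.Lex (· < ·) (suffStr s α) (suffStr s β) ∨
    (suffStr s α = suffStr s β ∧
      ((α.2 : ℕ) < (β.2 : ℕ) ∨ ((α.2 : ℕ) = (β.2 : ℕ) ∧ (α.1 : ℕ) < (β.1 : ℕ))))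

/-- `[b,e]` is the `p`-segment of position `i` in the sorted array `X`:
a position `j` carries the same `p`-prefix as position `i` iff `b ≤ j ≤ e`. -/
def isSeg (s : Fin m → Fin k → A) (p : ℕ) {n : ℕ}
    (X : Fin n → Fin m × Fin (k+1)) (b e i : Fin n) : Prop :=
  b ≤ i ∧ i ≤ e ∧ ∀ j, (pprefix s p (X j) = pprefix s p (X i) ↔ b ≤ j ∧ j ≤ e)

/-- Position `i` is the start of its `p`-segment in the sorted array `X`. -/
def isStart (s : Fin m → Fin k → A) (p : ℕ) {n : ℕ}
    (X : Fin n → Fin m × Fin (k+1)) (i : Fin n) : Prop :=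
  ∀ j, j < i → pprefix s p (X j) ≠ pprefix s p (X i)


section AuxLemmas

theorem SegAux.lex_append {α : Type*} {r : α → α → Prop} :
    ∀ {l₁ l₂ : List α}, List.Lex r l₁ l₂ → l₁.length = l₂.length →
    ∀ (t₁ t₂ : List α), List.Lex r (l₁ ++ t₁) (l₂ ++ t₂)
  | _, _, List.Lex.nil, hlen => by simp at hlen
  | _, _, List.Lex.cons h, hlen => fun t₁ t₂ =>
      List.Lex.cons (SegAux.lex_append h (by simpa using hlen) t₁ t₂)
  | _, _, List.Lex.rel h, _ => fun _ _ => List.Lex.rel h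

theorem SegAux.lex_append_out {α : Type*} {r : α → α → Prop} :
    ∀ (l₁ l₂ : List α) {t₁ t₂ : List α}, List.Lex r (l₁ ++ t₁) (l₂ ++ t₂) →
      l₁.length = l₂.length → List.Lex r l₁ l₂ ∨ (l₁ = l₂ ∧ List.Lex r t₁ t₂)
  | [], [], _, _, h, _ => Or.inr ⟨rfl, h⟩
  | [], _::_, _, _, _, hlen => by simp at hlen
  | _::_, [], _, _, _, hlen => by simp at hlen
  | a::l₁, b::l₂, t₁, t₂, h, hlen => by
    cases h with
    | rel h => exact Or.inl (List.Lex.rel h)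
    | cons h =>
      rcases SegAux.lex_append_out l₁ l₂ h (by simpa using hlen) with h' | ⟨rfl, h'⟩
      · exact Or.inl (List.Lex.cons h')
      · exact Or.inr ⟨rfl, h'⟩

theorem SegAux.down_char {N : ℕ} (S : Finset (Fin N))
    (hdc : ∀ j ∈ S, ∀ j' ≤ j, j' ∈ S) (j : Fin N) :
    j ∈ S ↔ (j : ℕ) < S.card := by
  constructor
  · intro hj
    have hsub : Finset.Iic j ⊆ S := fun x hx => hdc j hj x (Finset.mem_Iic.mp hx)
    have := Finset.card_le_card hsub
    rw [Fin.card_Iic] at this; omega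
  · intro hj; by_contra hjn
    have hsub : S ⊆ Finset.Iio j := fun x hx => by
      rcases lt_or_ge x j with h | h
      · exact Finset.mem_Iio.mpr h
      · exact absurd (hdc x hx j h) hjn
    have := Finset.card_le_card hsub
    rw [Fin.card_Iio] at this; omega

theorem SegAux.down_char' {N : ℕ} {b e : Fin N} (S : Finset (Fin N))
    (hsub : S ⊆ Finset.Icc b e)
    (hdc : ∀ j ∈ S, ∀ j' ∈ Finset.Icc b e, j' ≤ j → j' ∈ S) {j : Fin N}
    (hj : j ∈ Finset.Icc b e) : j ∈ S ↔ (j : ℕ) < (b : ℕ) + S.card := by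
  rw [Finset.mem_Icc] at hj
  have hbj : (b : ℕ) ≤ (j : ℕ) := hj.1
  have hje : (j : ℕ) ≤ (e : ℕ) := hj.2
  constructor
  · intro hjS
    have hsub2 : Finset.Icc b j ⊆ S := fun x hx => by
      rw [Finset.mem_Icc] at hx
      exact hdc j hjS x (Finset.mem_Icc.mpr ⟨hx.1, le_trans hx.2 hj.2⟩) hx.2
    have := Finset.card_le_card hsub2
    rw [Fin.card_Icc] at this; omega
  · intro hlt; by_contra hjn
    have hsub2 : S ⊆ Finset.Ico b j := fun x hx => by
      have hxI := hsub hx; rw [Finset.mem_Icc] at hxI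
      rcases lt_or_ge x j with h | h
      · exact Finset.mem_Ico.mpr ⟨hxI.1, h⟩
      · exact absurd (hdc x hx j (Finset.mem_Icc.mpr ⟨hj.1, hj.2⟩) h) hjn
    have := Finset.card_le_card hsub2
    rw [Fin.card_Ico] at this; omega

theorem SegAux.card_filter_comp {N : ℕ} {O' : Type*} [Fintype O'] (X : Fin N → O')
    (hbij : Function.Bijective X) (pred : O' → Prop)
    {D1 : DecidablePred (fun j => pred (X j))} :
    (@Finset.filter _ _ D1 Finset.univ).card = (Finset.univ.filter pred).card := by
  apply Finset.card_bij (fun j _ => X j)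
  · intro a ha
    simp only [Finset.mem_filter, Finset.mem_univ, true_and] at ha ⊢
    exact ha
  · intro a₁ _ a₂ _ h
    exact hbij.1 h
  · intro o ho
    simp only [Finset.mem_filter, Finset.mem_univ, true_and] at ho
    obtain ⟨j, rfl⟩ := hbij.2 o
    exact ⟨j, by simp [Finset.mem_filter, ho], rfl⟩

theorem SegAux.le_isLeft {A : Type*} [LinearOrder A] {x y : SSym A} (h : x ≤ y)
    (hy : (ofLex y).isLeft) : (ofLex x).isLeft := by
  rcases hx : ofLex x with a | a
  · simp
  · exfalso
    rcases hy' : ofLex y with b | b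
    · have hx' : x = toLex (Sum.inr a) := by rw [← hx]; rfl
      have hy'' : y = toLex (Sum.inl b) := by rw [← hy']; rfl
      have hlt : y < x := by rw [hx', hy'']; exact Sum.Lex.inl_lt_inr b a
      exact absurd h (not_le.mpr hlt)
    · rw [hy'] at hy; simp at hy

theorem SegAux.pprefix_length (s : Fin m → Fin k → A) (q : ℕ) (o : Fin m × Fin (k+1)) :
    (pprefix s q o).length = q := by simp [pprefix]

theorem SegAux.pprefix_succ (s : Fin m → Fin k → A) (q : ℕ) (o : Fin m × Fin (k+1)) :
    pprefix s (q+1) o = pprefix s q o ++ [symAt s o q] := by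
  simp only [pprefix, List.ofFn_succ', List.concat_eq_append, Fin.coe_castSucc, Fin.val_last]

theorem SegAux.symAt_left_inj (s : Fin m → Fin k → A) (t : ℕ) {α β : Fin m × Fin (k+1)}
    (h : symAt s α t = symAt s β t) (hl : (ofLex (symAt s α t)).isLeft) : α = β := by
  unfold symAt at h hl
  split_ifs at h hl with h1 h2 h2
  · simp [ofLex_toLex] at hl
  · simp [ofLex_toLex] at hl
  · exact absurd (toLex_inj.mp h) (by simp)
  · have h0 := toLex_inj.mp (Sum.inl_injective (toLex_inj.mp h))
    have h4 : (α.2 : ℕ) = (β.2 : ℕ) := congrArg Prod.fst h0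
    have h5 : (α.1 : ℕ) = (β.1 : ℕ) := congrArg Prod.snd h0
    exact Prod.ext (Fin.val_injective h5) (Fin.val_injective h4)

end AuxLemmas

/-- Let `[b,e]` be a `(p-1)`-segment of `X^{p-1}` and let
`Q j = symAt s (Xprev j) (p-1)` be the `p`-th symbol of the suffix at position `j`
(a sentinel — a `Sum.inl` value — iff the suffix is shorter than `p`).  Then in `X^p` the
interval `[b,e]` decomposes into exactly `n` consecutive `p`-segments, where
`n = #{sentinel positions in Q[b..e]} + #{distinct non-sentinel symbols in Q[b..e]}`
(counted below as the number of segment start positions in `[b,e]`); the sentinel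
positions give the first `#$` segments, each of width `1`; and for each distinct
non-sentinel symbol `c` the corresponding `p`-segment has width equal to the number of
occurrences of `c` in `Q[b..e]`. -/
theorem segment_decomposition (s : Fin m → Fin k → A) (p : ℕ) (hp : 1 ≤ p)
    (Xprev Xcur : Fin ((k + 1) * m) → Fin m × Fin (k + 1))
    (hbij1 : Function.Bijective Xprev)
    (hsort1 : ∀ i j, i < j → precP s (p - 1) (Xprev i) (Xprev j))
    (hbij2 : Function.Bijective Xcur)
    (hsort2 : ∀ i j, i < j → precP s p (Xcur i) (Xcur j))
    (b e : Fin ((k + 1) * m)) (hseg : isSeg s (p - 1) Xprev b e b) :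
    (((Finset.Icc b e).filter (fun i => isStart s p Xcur i)).card =
        ((Finset.Icc b e).filter
            (fun j => (ofLex (symAt s (Xprev j) (p - 1))).isLeft)).card +
          (((Finset.Icc b e).filter
              (fun j => ¬ (ofLex (symAt s (Xprev j) (p - 1))).isLeft)).image
            (fun j => symAt s (Xprev j) (p - 1))).card) ∧
    (∀ i : Fin ((k + 1) * m), b ≤ i →
      (i : ℕ) < (b : ℕ) +
        ((Finset.Icc b e).filter
          (fun j => (ofLex (symAt s (Xprev j) (p - 1))).isLeft)).card →
      isSeg s p Xcur i i i) ∧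
    (∀ c : SSym A, ¬ (ofLex c).isLeft →
      (∃ j, b ≤ j ∧ j ≤ e ∧ symAt s (Xprev j) (p - 1) = c) →
      ∃ b' e' : Fin ((k + 1) * m), b ≤ b' ∧ e' ≤ e ∧ isSeg s p Xcur b' e' b' ∧
        (e' : ℕ) - (b' : ℕ) + 1 =
          ((Finset.Icc b e).filter (fun j => symAt s (Xprev j) (p - 1) = c)).card ∧
        (∀ j, b' ≤ j → j ≤ e' → symAt s (Xcur j) (p - 1) = c)) := by
    classical
  obtain ⟨q, rfl⟩ : ∃ q, p = q + 1 := ⟨p - 1, (Nat.succ_pred_eq_of_pos hp).symm⟩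
  simp only [Nat.add_sub_cancel] at hsort1 hseg ⊢
  set P : List (SSym A) := pprefix s q (Xprev b) with hP
  have hbe : b ≤ e := hseg.2.1
  have hchar_prev : ∀ j, pprefix s q (Xprev j) = P ↔ (b ≤ j ∧ j ≤ e) := hseg.2.2
  have hmono1 : ∀ {i j : Fin ((k+1)*m)}, i < j →
      List.Lex (·<·) (pprefix s q (Xprev i)) (pprefix s q (Xprev j)) ∨
        pprefix s q (Xprev i) = pprefix s q (Xprev j) := by
    intro i j hij
    rcases hsort1 i j hij with h | ⟨h, _⟩
    · exact Or.inl h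
    · exact Or.inr h
  have hmono2 : ∀ {i j : Fin ((k+1)*m)}, i < j →
      List.Lex (·<·) (pprefix s (q+1) (Xcur i)) (pprefix s (q+1) (Xcur j)) ∨
        pprefix s (q+1) (Xcur i) = pprefix s (q+1) (Xcur j) := by
    intro i j hij
    rcases hsort2 i j hij with h | ⟨h, _⟩
    · exact Or.inl h
    · exact Or.inr h
  have hqeq_of : ∀ {x y : Fin m × Fin (k+1)}, pprefix s (q+1) x = pprefix s (q+1) y →
      pprefix s q x = pprefix s q y ∧ symAt s x q = symAt s y q := by
    intro x y h
    rw [SegAux.pprefix_succ, SegAux.pprefix_succ] at h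
    have h2 := List.append_inj h (by rw [SegAux.pprefix_length, SegAux.pprefix_length])
    exact ⟨h2.1, by simpa using h2.2⟩
  have hmono2q : ∀ {i j : Fin ((k+1)*m)}, i < j →
      List.Lex (·<·) (pprefix s q (Xcur i)) (pprefix s q (Xcur j)) ∨
        pprefix s q (Xcur i) = pprefix s q (Xcur j) := by
    intro i j hij
    rcases hmono2 hij with h | h
    · rw [SegAux.pprefix_succ, SegAux.pprefix_succ] at h
      rcases SegAux.lex_append_out _ _ h
          (by rw [SegAux.pprefix_length, SegAux.pprefix_length]) with h' | ⟨h', _⟩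
      · exact Or.inl h'
      · exact Or.inr h'
    · exact Or.inr (hqeq_of h).1
  have hlt_prev : ∀ j, List.Lex (·<·) (pprefix s q (Xprev j)) P ↔ j < b := by
    intro j
    constructor
    · intro h
      by_contra hnb
      push_neg at hnb
      rcases le_or_gt j e with hje | hej
      · have hPj := (hchar_prev j).mpr ⟨hnb, hje⟩
        rw [hPj] at h; exact asymm h h
      · have hble : b < j := lt_of_le_of_lt hbe hej
        rcases hmono1 hble with h2 | h2
        · rw [← hP] at h2; exact asymm h h2
        · rw [← hP] at h2; rw [← h2] at h; exact asymm h h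
    · intro hj
      rcases hmono1 hj with h | h
      · rw [← hP] at h; exact h
      · rw [← hP] at h
        have := (hchar_prev j).mp h
        exact absurd hj (not_lt.mpr this.1)
  have hle_prev : ∀ j, (List.Lex (·<·) (pprefix s q (Xprev j)) P ∨
      pprefix s q (Xprev j) = P) ↔ j ≤ e := by
    intro j
    constructor
    · rintro (h | h)
      · exact le_trans (le_of_lt ((hlt_prev j).mp h)) hbe
      · exact ((hchar_prev j).mp h).2
    · intro hje
      rcases le_or_gt b j with hbj | hjb
      · exact Or.inr ((hchar_prev j).mpr ⟨hbj, hje⟩)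
      · exact Or.inl ((hlt_prev j).mpr hjb)
  have hS1 : ∀ j, List.Lex (·<·) (pprefix s q (Xcur j)) P ↔ j < b := by
    have hdc_c : ∀ j ∈ Finset.univ.filter
        (fun j => List.Lex (·<·) (pprefix s q (Xcur j)) P), ∀ j' ≤ j,
        j' ∈ Finset.univ.filter (fun j => List.Lex (·<·) (pprefix s q (Xcur j)) P) := by
      intro j hj j' hj'
      simp only [Finset.mem_filter, Finset.mem_univ, true_and] at hj ⊢
      rcases eq_or_lt_of_le hj' with rfl | hlt
      · exact hj
      · rcases hmono2q hlt with h | h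
        · exact List.lex_trans lt_trans h hj
        · rw [h]; exact hj
    have hdc_p : ∀ j ∈ Finset.univ.filter
        (fun j => List.Lex (·<·) (pprefix s q (Xprev j)) P), ∀ j' ≤ j,
        j' ∈ Finset.univ.filter (fun j => List.Lex (·<·) (pprefix s q (Xprev j)) P) := by
      intro j hj j' hj'
      simp only [Finset.mem_filter, Finset.mem_univ, true_and] at hj ⊢
      rcases eq_or_lt_of_le hj' with rfl | hlt
      · exact hj
      · rcases hmono1 hlt with h | h
        · exact List.lex_trans lt_trans h hj
        · rw [h]; exact hj
    have hcards : (Finset.univ.filter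
          (fun j => List.Lex (·<·) (pprefix s q (Xcur j)) P)).card =
        (Finset.univ.filter (fun j => List.Lex (·<·) (pprefix s q (Xprev j)) P)).card := by
      exact (SegAux.card_filter_comp Xcur hbij2
          (fun o => List.Lex (·<·) (pprefix s q o) P)).trans
        (SegAux.card_filter_comp Xprev hbij1
          (fun o => List.Lex (·<·) (pprefix s q o) P)).symm
    intro j
    have h1 := SegAux.down_char _ hdc_c j
    have h2 := SegAux.down_char _ hdc_p j
    simp only [Finset.mem_filter, Finset.mem_univ, true_and] at h1 h2
    rw [h1, hcards]
    exact h2.symm.trans (hlt_prev j)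
  have hS2 : ∀ j, (List.Lex (·<·) (pprefix s q (Xcur j)) P ∨
      pprefix s q (Xcur j) = P) ↔ j ≤ e := by
    have hdc_c : ∀ j ∈ Finset.univ.filter (fun j =>
        List.Lex (·<·) (pprefix s q (Xcur j)) P ∨ pprefix s q (Xcur j) = P), ∀ j' ≤ j,
        j' ∈ Finset.univ.filter (fun j =>
          List.Lex (·<·) (pprefix s q (Xcur j)) P ∨ pprefix s q (Xcur j) = P) := by
      intro j hj j' hj'
      simp only [Finset.mem_filter, Finset.mem_univ, true_and] at hj ⊢
      rcases eq_or_lt_of_le hj' with rfl | hlt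
      · exact hj
      · rcases hmono2q hlt with h | h
        · rcases hj with hj | hj
          · exact Or.inl (List.lex_trans lt_trans h hj)
          · rw [hj] at h; exact Or.inl h
        · rw [h]; exact hj
    have hdc_p : ∀ j ∈ Finset.univ.filter (fun j =>
        List.Lex (·<·) (pprefix s q (Xprev j)) P ∨ pprefix s q (Xprev j) = P), ∀ j' ≤ j,
        j' ∈ Finset.univ.filter (fun j =>
          List.Lex (·<·) (pprefix s q (Xprev j)) P ∨ pprefix s q (Xprev j) = P) := by
      intro j hj j' hj'
      simp only [Finset.mem_filter, Finset.mem_univ, true_and] at hj ⊢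
      rcases eq_or_lt_of_le hj' with rfl | hlt
      · exact hj
      · rcases hmono1 hlt with h | h
        · rcases hj with hj | hj
          · exact Or.inl (List.lex_trans lt_trans h hj)
          · rw [hj] at h; exact Or.inl h
        · rw [h]; exact hj
    have hcards : (Finset.univ.filter (fun j =>
          List.Lex (·<·) (pprefix s q (Xcur j)) P ∨ pprefix s q (Xcur j) = P)).card =
        (Finset.univ.filter (fun j =>
          List.Lex (·<·) (pprefix s q (Xprev j)) P ∨ pprefix s q (Xprev j) = P)).card := by
      exact (SegAux.card_filter_comp Xcur hbij2
          (fun o => List.Lex (·<·) (pprefix s q o) P ∨ pprefix s q o = P)).trans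
        (SegAux.card_filter_comp Xprev hbij1
          (fun o => List.Lex (·<·) (pprefix s q o) P ∨ pprefix s q o = P)).symm
    intro j
    have h1 := SegAux.down_char _ hdc_c j
    have h2 := SegAux.down_char _ hdc_p j
    simp only [Finset.mem_filter, Finset.mem_univ, true_and] at h1 h2
    rw [h1, hcards]
    exact h2.symm.trans (hle_prev j)
  have hchar_cur : ∀ j, pprefix s q (Xcur j) = P ↔ (b ≤ j ∧ j ≤ e) := by
    intro j
    constructor
    · intro h
      refine ⟨?_, (hS2 j).mp (Or.inr h)⟩
      by_contra hnb
      push_neg at hnb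
      have := (hS1 j).mpr hnb
      rw [h] at this
      exact asymm this this
    · intro ⟨h1, h2⟩
      rcases (hS2 j).mpr h2 with h | h
      · exact absurd ((hS1 j).mp h) (not_lt.mpr h1)
      · exact h
  have key : ∀ (X : Fin ((k+1)*m) → Fin m × Fin (k+1)), Function.Bijective X →
      (∀ j, pprefix s q (X j) = P ↔ (b ≤ j ∧ j ≤ e)) → ∀ (pred : SSym A → Prop)
      (D1 : DecidablePred (fun j => pred (symAt s (X j) q))),
      (@Finset.filter _ _ D1 (Finset.Icc b e)).card =
        (Finset.univ.filter (fun o => pprefix s q o = P ∧ pred (symAt s o q))).card := by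
    intro X hbij hchar pred D1
    apply Finset.card_bij (fun j _ => X j)
    · intro a ha
      simp only [Finset.mem_filter, Finset.mem_Icc, Finset.mem_univ, true_and] at ha ⊢
      exact ⟨(hchar a).mpr ha.1, ha.2⟩
    · intro a₁ _ a₂ _ h
      exact hbij.1 h
    · intro o ho
      simp only [Finset.mem_filter, Finset.mem_univ, true_and] at ho
      obtain ⟨j, rfl⟩ := hbij.2 o
      refine ⟨j, ?_, rfl⟩
      simp only [Finset.mem_filter, Finset.mem_Icc]
      exact ⟨(hchar j).mp ho.1, ho.2⟩
  have htrans : ∀ (pred : SSym A → Prop)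
      (D1 : DecidablePred (fun j => pred (symAt s (Xprev j) q)))
      (D2 : DecidablePred (fun j => pred (symAt s (Xcur j) q))),
      (@Finset.filter _ _ D1 (Finset.Icc b e)).card =
        (@Finset.filter _ _ D2 (Finset.Icc b e)).card := by
    intro pred D1 D2
    exact (key Xprev hbij1 hchar_prev pred D1).trans (key Xcur hbij2 hchar_cur pred D2).symm
  have hPj : ∀ j, b ≤ j → j ≤ e →
      pprefix s (q+1) (Xcur j) = P ++ [symAt s (Xcur j) q] := by
    intro j h1 h2
    rw [SegAux.pprefix_succ, (hchar_cur j).mpr ⟨h1, h2⟩]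
  have hcc_mono : ∀ {i j : Fin ((k+1)*m)}, b ≤ i → i ≤ j → j ≤ e →
      symAt s (Xcur i) q ≤ symAt s (Xcur j) q := by
    intro i j hbi hij hje
    rcases eq_or_lt_of_le hij with rfl | hlt
    · exact le_refl _
    rcases hmono2 hlt with h | h
    · rw [hPj i hbi (le_trans hij hje), hPj j (le_trans hbi hij) hje] at h
      rcases SegAux.lex_append_out _ _ h rfl with h' | ⟨_, h'⟩
      · exact (asymm h' h').elim
      · exact le_of_lt ((List.lex_singleton_iff _ _).mp h')
    · exact le_of_eq (hqeq_of h).2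
  refine ⟨?_, ?_, ?_⟩
  · -- Part 1: counting segment starts
    have himq : ((Finset.Icc b e).image (fun j => symAt s (Xprev j) q)) =
        ((Finset.Icc b e).image (fun j => symAt s (Xcur j) q)) := by
      ext v
      simp only [Finset.mem_image]
      constructor
      · rintro ⟨j, hj, rfl⟩
        have h0 : 0 < ((Finset.Icc b e).filter
            (fun j' => symAt s (Xprev j') q = symAt s (Xprev j) q)).card :=
          Finset.card_pos.mpr ⟨j, Finset.mem_filter.mpr ⟨hj, rfl⟩⟩
        have hpos : 0 < ((Finset.Icc b e).filter
            (fun j' => symAt s (Xcur j') q = symAt s (Xprev j) q)).card :=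
          lt_of_lt_of_eq h0 (htrans (fun v => v = symAt s (Xprev j) q) _ _)
        obtain ⟨j', hj'⟩ := Finset.card_pos.mp hpos
        exact ⟨j', (Finset.mem_filter.mp hj').1, (Finset.mem_filter.mp hj').2⟩
      · rintro ⟨j, hj, rfl⟩
        have h0 : 0 < ((Finset.Icc b e).filter
            (fun j' => symAt s (Xcur j') q = symAt s (Xcur j) q)).card :=
          Finset.card_pos.mpr ⟨j, Finset.mem_filter.mpr ⟨hj, rfl⟩⟩
        have hpos : 0 < ((Finset.Icc b e).filter
            (fun j' => symAt s (Xprev j') q = symAt s (Xcur j) q)).card :=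
          lt_of_lt_of_eq h0 (htrans (fun v => v = symAt s (Xcur j) q) _ _).symm
        obtain ⟨j', hj'⟩ := Finset.card_pos.mp hpos
        exact ⟨j', (Finset.mem_filter.mp hj').1, (Finset.mem_filter.mp hj').2⟩
    have hstart_card : ((Finset.Icc b e).filter (fun i => isStart s (q+1) Xcur i)).card =
        ((Finset.Icc b e).image (fun j => symAt s (Xcur j) q)).card := by
      apply Finset.card_bij (fun i _ => symAt s (Xcur i) q)
      · intro a ha
        exact Finset.mem_image_of_mem _ (Finset.mem_filter.mp ha).1
      · intro a₁ ha₁ a₂ ha₂ h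
        have ha₁' := Finset.mem_filter.mp ha₁
        have ha₂' := Finset.mem_filter.mp ha₂
        have hI₁ := Finset.mem_Icc.mp ha₁'.1
        have hI₂ := Finset.mem_Icc.mp ha₂'.1
        by_contra hne
        rcases lt_or_gt_of_ne hne with hlt | hlt
        · exact ha₂'.2 a₁ hlt
            (by rw [hPj a₁ hI₁.1 hI₁.2, hPj a₂ hI₂.1 hI₂.2, h])
        · exact ha₁'.2 a₂ hlt
            (by rw [hPj a₁ hI₁.1 hI₁.2, hPj a₂ hI₂.1 hI₂.2, h])
      · intro v hv
        simp only [Finset.mem_image] at hv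
        obtain ⟨j₀, hj₀, rfl⟩ := hv
        set F := (Finset.Icc b e).filter
          (fun j => symAt s (Xcur j) q = symAt s (Xcur j₀) q) with hF
        have hne : F.Nonempty := ⟨j₀, Finset.mem_filter.mpr ⟨hj₀, rfl⟩⟩
        have hmem := Finset.mem_filter.mp (F.min'_mem hne)
        refine ⟨F.min' hne, ?_, hmem.2⟩
        refine Finset.mem_filter.mpr ⟨hmem.1, ?_⟩
        intro j hji heq
        have hicc := Finset.mem_Icc.mp hmem.1
        have hq0 := (hqeq_of heq).1
        rw [(hchar_cur _).mpr hicc] at hq0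
        have hjicc := (hchar_cur j).mp hq0
        have hsym := (hqeq_of heq).2
        have hjF : j ∈ F := Finset.mem_filter.mpr
          ⟨Finset.mem_Icc.mpr hjicc, by rw [hsym, hmem.2]⟩
        exact absurd (F.min'_le j hjF) (not_le.mpr hji)
    have hL : ((Finset.Icc b e).filter
          (fun j => (ofLex (symAt s (Xprev j) q)).isLeft)).card =
        (((Finset.Icc b e).filter (fun j => (ofLex (symAt s (Xprev j) q)).isLeft)).image
          (fun j => symAt s (Xprev j) q)).card := by
      refine (Finset.card_image_of_injOn ?_).symm
      intro j₁ hj₁ j₂ _ h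
      have := SegAux.symAt_left_inj s q h (Finset.mem_filter.mp hj₁).2
      exact hbij1.1 this
    have hdisj : Disjoint
        (((Finset.Icc b e).filter (fun j => (ofLex (symAt s (Xprev j) q)).isLeft)).image
          (fun j => symAt s (Xprev j) q))
        (((Finset.Icc b e).filter (fun j => ¬(ofLex (symAt s (Xprev j) q)).isLeft)).image
          (fun j => symAt s (Xprev j) q)) := by
      rw [Finset.disjoint_left]
      rintro v hv1 hv2
      simp only [Finset.mem_image, Finset.mem_filter] at hv1 hv2
      obtain ⟨j₁, ⟨_, h1⟩, rfl⟩ := hv1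
      obtain ⟨j₂, ⟨_, h2⟩, he2⟩ := hv2
      rw [he2] at h2
      exact h2 h1
    have hRHS : ((Finset.Icc b e).image (fun j => symAt s (Xprev j) q)).card =
        ((Finset.Icc b e).filter
          (fun j => (ofLex (symAt s (Xprev j) q)).isLeft)).card +
        (((Finset.Icc b e).filter (fun j => ¬(ofLex (symAt s (Xprev j) q)).isLeft)).image
          (fun j => symAt s (Xprev j) q)).card := by
      conv_lhs => rw [← Finset.filter_union_filter_not_eq
        (fun j => (ofLex (symAt s (Xprev j) q)).isLeft) (Finset.Icc b e)]
      rw [Finset.image_union, Finset.card_union_of_disjoint hdisj, ← hL]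
    rw [hstart_card, ← himq, hRHS]
  · -- Part 2: sentinel singletons
    intro i hbi hlt
    set d := ((Finset.Icc b e).filter
      (fun j => (ofLex (symAt s (Xprev j) q)).isLeft)).card with hd
    have hdc : d = ((Finset.Icc b e).filter
        (fun j => (ofLex (symAt s (Xcur j) q)).isLeft)).card :=
      htrans (fun v => (ofLex v).isLeft) _ _
    set Sc := (Finset.Icc b e).filter
      (fun j => (ofLex (symAt s (Xcur j) q)).isLeft) with hSc
    have hScs : Sc ⊆ Finset.Icc b e := Finset.filter_subset _ _
    have hScdc : ∀ j ∈ Sc, ∀ j' ∈ Finset.Icc b e, j' ≤ j → j' ∈ Sc := by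
      intro j hj j' hj' hle
      rw [hSc, Finset.mem_filter] at hj ⊢
      refine ⟨hj', ?_⟩
      have h1 := Finset.mem_Icc.mp hj'
      have h2 := Finset.mem_Icc.mp hj.1
      exact SegAux.le_isLeft (hcc_mono h1.1 hle h2.2) hj.2
    have hie : i ≤ e := by
      have hcard_le : d ≤ (e:ℕ) + 1 - (b:ℕ) := by
        rw [hdc, ← Fin.card_Icc b e]
        exact Finset.card_le_card hScs
      have h1 : (b:ℕ) ≤ (e:ℕ) := Fin.le_def.mp hbe
      have h2 : (b:ℕ) ≤ (i:ℕ) := Fin.le_def.mp hbi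
      exact Fin.le_def.mpr (by omega)
    have hiIcc : i ∈ Finset.Icc b e := Finset.mem_Icc.mpr ⟨hbi, hie⟩
    have hileft : (ofLex (symAt s (Xcur i) q)).isLeft := by
      have hmem := (SegAux.down_char' Sc hScs hScdc hiIcc).mpr (by rw [← hdc]; exact hlt)
      exact (Finset.mem_filter.mp hmem).2
    refine ⟨le_refl i, le_refl i, fun j => ?_⟩
    constructor
    · intro heq
      have hq0 := (hqeq_of heq).1
      rw [(hchar_cur i).mpr ⟨hbi, hie⟩] at hq0
      have hsym := (hqeq_of heq).2
      have hXeq : Xcur j = Xcur i :=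
        SegAux.symAt_left_inj s q hsym (by rw [hsym]; exact hileft)
      have hji := hbij2.1 hXeq
      exact ⟨le_of_eq hji.symm, le_of_eq hji⟩
    · intro ⟨h1, h2⟩
      rw [le_antisymm h2 h1]
  · -- Part 3: non-sentinel segments
    intro c hcl hex
    obtain ⟨j₀, hj₀b, hj₀e, hj₀⟩ := hex
    set F := (Finset.Icc b e).filter (fun j => symAt s (Xcur j) q = c) with hFdef
    have hcards : ((Finset.Icc b e).filter (fun j => symAt s (Xprev j) q = c)).card =
        F.card := htrans (fun v => v = c) _ _
    have hne : F.Nonempty := by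
      rw [← Finset.card_pos, ← hcards]
      exact Finset.card_pos.mpr
        ⟨j₀, Finset.mem_filter.mpr ⟨Finset.mem_Icc.mpr ⟨hj₀b, hj₀e⟩, hj₀⟩⟩
    set b' := F.min' hne with hb'def
    set e' := F.max' hne with he'def
    have hb'm := Finset.mem_filter.mp (F.min'_mem hne)
    have he'm := Finset.mem_filter.mp (F.max'_mem hne)
    have hb'I := Finset.mem_Icc.mp hb'm.1
    have he'I := Finset.mem_Icc.mp he'm.1
    have hb'e' : b' ≤ e' := F.min'_le _ (F.max'_mem hne)
    have hsand : ∀ j, b' ≤ j → j ≤ e' → (b ≤ j ∧ j ≤ e) ∧ symAt s (Xcur j) q = c := by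
      intro j h1 h2
      have hjb : b ≤ j := le_trans hb'I.1 h1
      have hje : j ≤ e := le_trans h2 he'I.2
      refine ⟨⟨hjb, hje⟩, ?_⟩
      have hle1 : symAt s (Xcur b') q ≤ symAt s (Xcur j) q := hcc_mono hb'I.1 h1 hje
      have hle2 : symAt s (Xcur j) q ≤ symAt s (Xcur e') q := hcc_mono hjb h2 he'I.2
      rw [hb'm.2] at hle1
      rw [he'm.2] at hle2
      exact le_antisymm hle2 hle1
    have hFicc : F = Finset.Icc b' e' := by
      ext j
      constructor
      · intro hj
        exact Finset.mem_Icc.mpr ⟨F.min'_le j hj, F.le_max' j hj⟩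
      · intro hj
        obtain ⟨h1, h2⟩ := Finset.mem_Icc.mp hj
        obtain ⟨hI, hc'⟩ := hsand j h1 h2
        exact Finset.mem_filter.mpr ⟨Finset.mem_Icc.mpr hI, hc'⟩
    refine ⟨b', e', hb'I.1, he'I.2, ?_, ?_, fun j h1 h2 => (hsand j h1 h2).2⟩
    · refine ⟨le_refl _, hb'e', fun j => ?_⟩
      constructor
      · intro heq
        have hq0 := (hqeq_of heq).1
        rw [(hchar_cur b').mpr hb'I] at hq0
        have hjI := (hchar_cur j).mp hq0
        have hsym := (hqeq_of heq).2
        rw [hb'm.2] at hsym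
        have hjF : j ∈ F := Finset.mem_filter.mpr ⟨Finset.mem_Icc.mpr hjI, hsym⟩
        exact ⟨F.min'_le j hjF, F.le_max' j hjF⟩
      · intro ⟨h1, h2⟩
        obtain ⟨hI, hc'⟩ := hsand j h1 h2
        rw [SegAux.pprefix_succ, SegAux.pprefix_succ, (hchar_cur j).mpr hI,
          (hchar_cur b').mpr hb'I, hc', hb'm.2]
    · rw [hcards, hFicc, Fin.card_Icc]
      have h1 : (b':ℕ) ≤ (e':ℕ) := Fin.le_def.mp hb'e'
      omega
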